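/- Expected uniform deviation bound via a net: under the hypotheses of the previous statement (𝒢 a class of measurable functions 𝒵 → [0,2] with a (1/n)-net of size at most (6n)^{2d}, and Z_1,…,Z_n i.i.d.), setting t* = √((4d·log(6n) + 2·log 2)/n), the supremum U = sup_{g ∈ 𝒢} |(1/n)·Σ_{i=1}^n g(Z_i) − E[g(Z_1)]| satisfies E[U] ≤ 2/n + t* + 1/(n·t*). -/

import Mathlib

open MeasureTheory
open Real Set Filter
open scoped ENNReal


lemma hoeff_calc {p : ℝ} (hp0 : 0 ≤ p) (hp1 : p ≤ 1) (h : ℝ) :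
    (1 - p) + p * Real.exp h ≤ Real.exp (h ^ 2 / 8 + p * h) := by
  have hD : ∀ x : ℝ, 0 < 1 - p + p * Real.exp x := by
    intro x
    rcases eq_or_lt_of_le hp0 with h0 | h0
    · simp [← h0]
    · nlinarith [Real.exp_pos x]
  set φ : ℝ → ℝ := fun x => x ^ 2 / 8 + p * x - Real.log (1 - p + p * Real.exp x) with hφ
  set φ' : ℝ → ℝ := fun x => x / 4 + p - p * Real.exp x / (1 - p + p * Real.exp x) with hφ'
  have hDder : ∀ x : ℝ, HasDerivAt (fun x : ℝ => 1 - p + p * Real.exp x) (p * Real.exp x) x := by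
    intro x
    simpa using ((Real.hasDerivAt_exp x).const_mul p).const_add (1 - p)
  have hder1 : ∀ x, HasDerivAt φ (φ' x) x := by
    intro x
    have h1 : HasDerivAt (fun x : ℝ => x ^ 2 / 8) (x / 4) x := by
      have := (hasDerivAt_pow 2 x).div_const 8
      refine this.congr_deriv ?_
      push_cast; ring
    have h2 : HasDerivAt (fun x : ℝ => p * x) p x := by
      simpa using (hasDerivAt_id x).const_mul p
    have h3 := (hDder x).log (hD x).ne'
    exact (h1.add h2).sub h3
  have hder2 : ∀ x, HasDerivAt φ'
      (1 / 4 - (p * Real.exp x * (1 - p + p * Real.exp x) - p * Real.exp x * (p * Real.exp x)) /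
        (1 - p + p * Real.exp x) ^ 2) x := by
    intro x
    have hnum : HasDerivAt (fun x : ℝ => p * Real.exp x) (p * Real.exp x) x :=
      (Real.hasDerivAt_exp x).const_mul p
    have hq1 : HasDerivAt (fun x : ℝ => x / 4 + p) (1 / 4) x := by
      simpa using ((hasDerivAt_id x).div_const 4).add_const p
    exact hq1.sub (hnum.div (hDder x) (hD x).ne')
  have hmono : Monotone φ' := by
    refine monotone_of_deriv_nonneg (fun x => (hder2 x).differentiableAt) (fun x => ?_)
    rw [(hder2 x).deriv]
    have hDx := hD x
    have hex := Real.exp_pos x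
    rw [sub_nonneg, div_le_iff₀ (by positivity)]
    nlinarith [sq_nonneg (1 - p - p * Real.exp x)]
  have hφ'0 : φ' 0 = 0 := by
    simp only [hφ', Real.exp_zero, mul_one]
    rw [show (1 : ℝ) - p + p = 1 by ring]
    simp
  have hφ0 : φ 0 = 0 := by
    simp only [hφ, Real.exp_zero, mul_one]
    rw [show (1 : ℝ) - p + p = 1 by ring]
    simp
  have hφnn : 0 ≤ φ h := by
    rcases le_or_gt 0 h with hh | hh
    · have hm : MonotoneOn φ (Set.Ici (0:ℝ)) := by
        refine monotoneOn_of_deriv_nonneg (convex_Ici 0)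
          (fun x _ => (hder1 x).continuousAt.continuousWithinAt)
          (fun x _ => (hder1 x).differentiableAt.differentiableWithinAt) (fun x hx => ?_)
        rw [(hder1 x).deriv]
        have : φ' 0 ≤ φ' x := hmono (le_of_lt (by simpa using hx))
        linarith [hφ'0 ▸ this]
      have := hm (Set.self_mem_Ici) (Set.mem_Ici.2 hh) hh
      linarith [hφ0 ▸ this]
    · have hm : AntitoneOn φ (Set.Iic (0:ℝ)) := by
        refine antitoneOn_of_deriv_nonpos (convex_Iic 0)
          (fun x _ => (hder1 x).continuousAt.continuousWithinAt)
          (fun x _ => (hder1 x).differentiableAt.differentiableWithinAt) (fun x hx => ?_)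
        rw [(hder1 x).deriv]
        have : φ' x ≤ φ' 0 := hmono (le_of_lt (by simpa using hx))
        linarith [hφ'0 ▸ this]
      have := hm (Set.mem_Iic.2 hh.le) (Set.self_mem_Iic) hh.le
      linarith [hφ0 ▸ this]
  have hlog : Real.log (1 - p + p * Real.exp h) ≤ h ^ 2 / 8 + p * h := by
    have := hφnn
    simp only [hφ] at this
    linarith
  calc (1 : ℝ) - p + p * Real.exp h = Real.exp (Real.log (1 - p + p * Real.exp h)) := by
        rw [Real.exp_log (hD h)]
    _ ≤ Real.exp (h ^ 2 / 8 + p * h) := Real.exp_le_exp.2 hlog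

lemma bdd_integrable {Z : Type*} [MeasurableSpace Z] (ν : Measure Z) [IsFiniteMeasure ν]
    {f : Z → ℝ} (hf : Measurable f) {C : ℝ} (hC : ∀ z, |f z| ≤ C) : Integrable f ν :=
  Integrable.mono' (integrable_const C) hf.aestronglyMeasurable
    (Filter.Eventually.of_forall fun z => by simpa [Real.norm_eq_abs] using hC z)

lemma hoeff_mgf {Z : Type*} [MeasurableSpace Z] (ν : Measure Z) [IsProbabilityMeasure ν]
    (f : Z → ℝ) (hf : Measurable f) (hf2 : ∀ z, f z ∈ Set.Icc (0:ℝ) 2) (s : ℝ) :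
    ∫ z, Real.exp (s * (f z - ∫ z, f z ∂ν)) ∂ν ≤ Real.exp (s ^ 2 / 2) := by
  set m := ∫ z, f z ∂ν with hm
  have hfint : Integrable f ν := bdd_integrable ν hf (C := 2)
    (fun z => abs_le.2 ⟨by linarith [(hf2 z).1], (hf2 z).2⟩)
  have hm0 : 0 ≤ m := integral_nonneg fun z => (hf2 z).1
  have hm2 : m ≤ 2 := by
    calc m ≤ ∫ _, (2:ℝ) ∂ν := integral_mono hfint (integrable_const 2) fun z => (hf2 z).2
    _ = 2 := by simp
  have hpt : ∀ z, Real.exp (s * (f z - m)) ≤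
      (1 - f z / 2) * Real.exp (s * (0 - m)) + (f z / 2) * Real.exp (s * (2 - m)) := by
    intro z
    have h1 : (0:ℝ) ≤ 1 - f z / 2 := by linarith [(hf2 z).2]
    have h2 : (0:ℝ) ≤ f z / 2 := by linarith [(hf2 z).1]
    have hcx := convexOn_exp.2 (Set.mem_univ (s * (0 - m))) (Set.mem_univ (s * (2 - m)))
      h1 h2 (by ring)
    have harg : (1 - f z / 2) • (s * (0 - m)) + (f z / 2) • (s * (2 - m)) = s * (f z - m) := by
      simp only [smul_eq_mul]; ring
    rw [harg] at hcx
    simpa [smul_eq_mul] using hcx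
  have hint1 : Integrable (fun z => Real.exp (s * (f z - m))) ν := by
    refine bdd_integrable ν ((hf.sub_const m).const_mul s).exp (C := Real.exp (|s| * 2)) ?_
    intro z
    rw [abs_of_nonneg (Real.exp_pos _).le]
    apply Real.exp_le_exp.2
    calc s * (f z - m) ≤ |s * (f z - m)| := le_abs_self _
    _ = |s| * |f z - m| := abs_mul _ _
    _ ≤ |s| * 2 := by
        apply mul_le_mul_of_nonneg_left _ (abs_nonneg s)
        rw [abs_le]; constructor <;> [linarith [(hf2 z).1]; linarith [(hf2 z).2]]
  have hia : Integrable (fun z => (1 - f z / 2) * Real.exp (s * (0 - m))) ν :=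
    ((integrable_const (1:ℝ)).sub (hfint.div_const 2)).mul_const _
  have hib : Integrable (fun z => (f z / 2) * Real.exp (s * (2 - m))) ν :=
    (hfint.div_const 2).mul_const _
  have step1 : ∫ z, Real.exp (s * (f z - m)) ∂ν ≤
      (1 - m / 2) * Real.exp (s * (0 - m)) + (m / 2) * Real.exp (s * (2 - m)) := by
    calc ∫ z, Real.exp (s * (f z - m)) ∂ν
        ≤ ∫ z, ((1 - f z / 2) * Real.exp (s * (0 - m)) + (f z / 2) * Real.exp (s * (2 - m))) ∂ν :=
          integral_mono hint1 (hia.add hib) hpt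
    _ = (1 - m / 2) * Real.exp (s * (0 - m)) + (m / 2) * Real.exp (s * (2 - m)) := by
        rw [integral_add hia hib, integral_mul_const, integral_mul_const,
          integral_sub (integrable_const 1) (hfint.div_const 2), integral_div, integral_const]
        simp [integral_div, ← hm]
  have key := hoeff_calc (p := m / 2) (by linarith) (by linarith) (2 * s)
  have e1 : Real.exp (s * (2 - m)) = Real.exp (2 * s) * Real.exp (s * (0 - m)) := by
    rw [← Real.exp_add]; ring_nf
  have e2 : Real.exp ((2 * s) ^ 2 / 8 + (m / 2) * (2 * s)) * Real.exp (s * (0 - m)) =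
      Real.exp (s ^ 2 / 2) := by
    rw [← Real.exp_add]; ring_nf
  have final : (1 - m / 2) * Real.exp (s * (0 - m)) + (m / 2) * Real.exp (s * (2 - m)) ≤
      Real.exp (s ^ 2 / 2) := by
    calc (1 - m / 2) * Real.exp (s * (0 - m)) + (m / 2) * Real.exp (s * (2 - m))
        = ((1 - m / 2) + (m / 2) * Real.exp (2 * s)) * Real.exp (s * (0 - m)) := by
          rw [e1]; ring
    _ ≤ Real.exp ((2 * s) ^ 2 / 8 + (m / 2) * (2 * s)) * Real.exp (s * (0 - m)) :=
          mul_le_mul_of_nonneg_right key (Real.exp_pos _).le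
    _ = Real.exp (s ^ 2 / 2) := e2
  linarith

lemma chernoff_bound {Z : Type*} [MeasurableSpace Z] (ν : Measure Z) [IsProbabilityMeasure ν]
    (n : ℕ) (hn : 1 ≤ n) (f : Z → ℝ) (hf : Measurable f) (hf2 : ∀ z, f z ∈ Set.Icc (0:ℝ) 2)
    (t : ℝ) (ht : 0 ≤ t) :
    ((Measure.pi fun _ : Fin n => ν)
        {ω | t ≤ |(1 / (n : ℝ)) * ∑ i : Fin n, f (ω i) - ∫ z, f z ∂ν|}).toReal
      ≤ 2 * Real.exp (-(n : ℝ) * t ^ 2 / 2) := by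
  set μ := Measure.pi fun _ : Fin n => ν with hμdef
  haveI : IsProbabilityMeasure μ := by rw [hμdef]; infer_instance
  have hnpos : (0:ℝ) < n := by exact_mod_cast hn
  -- one-sided Chernoff bound
  have one_side : ∀ g : Z → ℝ, Measurable g → (∀ z, g z ∈ Set.Icc (0:ℝ) 2) →
      (μ {ω : Fin n → Z | (n : ℝ) * t ≤ ∑ i : Fin n, (g (ω i) - ∫ z, g z ∂ν)}).toReal
        ≤ Real.exp (-(n : ℝ) * t ^ 2 / 2) := by
    intro g hg hg2
    set mg := ∫ z, g z ∂ν with hmg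
    set Y : (Fin n → Z) → ℝ := fun ω => ∑ i : Fin n, (g (ω i) - mg) with hY
    have hYmeas : Measurable Y := by
      apply Finset.measurable_sum
      exact fun i _ => (hg.comp (measurable_pi_apply i)).sub_const mg
    have hmg0 : 0 ≤ mg := integral_nonneg fun z => (hg2 z).1
    have hgint : Integrable g ν := by
      refine bdd_integrable ν hg (C := 2) fun z => abs_le.2 ⟨?_, (hg2 z).2⟩
      linarith [(hg2 z).1]
    have hmg2 : mg ≤ 2 := by
      calc mg ≤ ∫ _, (2:ℝ) ∂ν := integral_mono hgint (integrable_const 2) fun z => (hg2 z).2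
      _ = 2 := by simp
    have hYbd : ∀ ω, |Y ω| ≤ 2 * n := by
      intro ω
      have : |Y ω| ≤ ∑ i : Fin n, |g (ω i) - mg| := Finset.abs_sum_le_sum_abs _ _
      refine this.trans ?_
      calc ∑ i : Fin n, |g (ω i) - mg| ≤ ∑ _i : Fin n, (2:ℝ) := by
            refine Finset.sum_le_sum fun i _ => ?_
            rw [abs_le]; exact ⟨by linarith [(hg2 (ω i)).1], by linarith [(hg2 (ω i)).2]⟩
      _ = 2 * n := by simp [mul_comm]
    have hint : Integrable (fun ω => Real.exp (t * Y ω)) μ := by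
      refine bdd_integrable μ (hYmeas.const_mul t).exp (C := Real.exp (t * (2 * n))) ?_
      intro ω
      rw [abs_of_nonneg (Real.exp_pos _).le]
      apply Real.exp_le_exp.2
      calc t * Y ω ≤ |t * Y ω| := le_abs_self _
      _ = t * |Y ω| := by rw [abs_mul, abs_of_nonneg ht]
      _ ≤ t * (2 * n) := mul_le_mul_of_nonneg_left (hYbd ω) ht
    have hmgf : ProbabilityTheory.mgf Y μ t ≤ Real.exp (t ^ 2 / 2) ^ n := by
      letI : MeasureSpace Z := ⟨ν⟩
      have hfub := MeasureTheory.integral_fintype_prod_eq_pow (𝕜 := ℝ) (ι := Fin n) (μ := ν)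
        (fun z => Real.exp (t * (g z - mg)))
      have hfub2 : (∫ ω, (∏ i : Fin n, Real.exp (t * (g (ω i) - mg))) ∂μ) =
          (∫ z, Real.exp (t * (g z - mg)) ∂ν) ^ n := by
        simpa [Fintype.card_fin] using hfub
      have heq : ∀ ω : Fin n → Z, Real.exp (t * Y ω) =
          ∏ i : Fin n, Real.exp (t * (g (ω i) - mg)) := by
        intro ω
        rw [← Real.exp_sum, hY, Finset.mul_sum]
      calc ProbabilityTheory.mgf Y μ t = ∫ ω, Real.exp (t * Y ω) ∂μ := rfl
      _ = ∫ ω, (∏ i : Fin n, Real.exp (t * (g (ω i) - mg))) ∂μ :=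
            integral_congr_ae (Filter.Eventually.of_forall fun ω => heq ω)
      _ = (∫ z, Real.exp (t * (g z - mg)) ∂ν) ^ n := hfub2
      _ ≤ Real.exp (t ^ 2 / 2) ^ n :=
            pow_le_pow_left₀ (integral_nonneg fun z => (Real.exp_pos _).le)
              (hoeff_mgf ν g hg hg2 t) n
    have hcher := ProbabilityTheory.measure_ge_le_exp_mul_mgf (μ := μ) (X := Y)
      ((n : ℝ) * t) ht hint
    calc (μ {ω : Fin n → Z | (n : ℝ) * t ≤ ∑ i : Fin n, (g (ω i) - ∫ z, g z ∂ν)}).toReal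
        = (μ {ω : Fin n → Z | (n : ℝ) * t ≤ Y ω}).toReal := rfl
    _ ≤ Real.exp (-t * ((n : ℝ) * t)) * ProbabilityTheory.mgf Y μ t := hcher
    _ ≤ Real.exp (-t * ((n : ℝ) * t)) * Real.exp (t ^ 2 / 2) ^ n :=
          mul_le_mul_of_nonneg_left hmgf (Real.exp_pos _).le
    _ = Real.exp (-(n : ℝ) * t ^ 2 / 2) := by
          rw [← Real.exp_nat_mul, ← Real.exp_add]
          congr 1; ring
  -- combine the two tails
  set m := ∫ z, f z ∂ν with hm
  set A : Set (Fin n → Z) := {ω | (n : ℝ) * t ≤ ∑ i : Fin n, (f (ω i) - m)} with hA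
  set B : Set (Fin n → Z) :=
    {ω | (n : ℝ) * t ≤ ∑ i : Fin n, ((fun z => 2 - f z) (ω i) - ∫ z, (2 - f z) ∂ν)} with hB
  have hintf : Integrable f ν := by
    refine bdd_integrable ν hf (C := 2) fun z => abs_le.2 ⟨?_, (hf2 z).2⟩
    linarith [(hf2 z).1]
  have hm2 : ∫ z, (2 - f z) ∂ν = 2 - m := by
    rw [integral_sub (integrable_const 2) hintf, integral_const]; simp [hm]
  have hsub : {ω : Fin n → Z | t ≤ |(1 / (n : ℝ)) * ∑ i : Fin n, f (ω i) - m|} ⊆ A ∪ B := by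
    intro ω hω
    simp only [Set.mem_setOf_eq] at hω
    have hsum : (1 / (n : ℝ)) * ∑ i : Fin n, f (ω i) - m =
        (∑ i : Fin n, (f (ω i) - m)) / n := by
      rw [Finset.sum_sub_distrib, Finset.sum_const]
      simp only [Finset.card_univ, Fintype.card_fin, nsmul_eq_mul]
      field_simp
    rw [hsum, abs_div, abs_of_pos hnpos] at hω
    have habs : (n : ℝ) * t ≤ |∑ i : Fin n, (f (ω i) - m)| := by
      have := (le_div_iff₀ hnpos).1 hω
      linarith
    rcases le_abs.1 habs with h1 | h1
    · exact Or.inl h1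
    · refine Or.inr ?_
      simp only [hB, Set.mem_setOf_eq, hm2]
      have : ∑ i : Fin n, ((2 : ℝ) - f (ω i) - (2 - m)) = -∑ i : Fin n, (f (ω i) - m) := by
        rw [← Finset.sum_neg_distrib]
        exact Finset.sum_congr rfl fun i _ => by ring
      rw [this]
      exact h1
  have hAB := (measure_mono hsub).trans (measure_union_le (μ := μ) A B)
  calc (μ {ω : Fin n → Z | t ≤ |(1 / (n : ℝ)) * ∑ i : Fin n, f (ω i) - m|}).toReal
      ≤ (μ A + μ B).toReal := ENNReal.toReal_mono
        (by exact ENNReal.add_ne_top.2 ⟨measure_ne_top _ _, measure_ne_top _ _⟩) hAB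
  _ = (μ A).toReal + (μ B).toReal := ENNReal.toReal_add (measure_ne_top _ _) (measure_ne_top _ _)
  _ ≤ Real.exp (-(n : ℝ) * t ^ 2 / 2) + Real.exp (-(n : ℝ) * t ^ 2 / 2) := by
      refine add_le_add ?_ ?_
      · exact one_side f hf hf2
      · refine one_side (fun z => 2 - f z) (measurable_const.sub hf) fun z => ?_
        simp only [Set.mem_Icc]
        constructor
        · linarith [(hf2 z).2]
        · linarith [(hf2 z).1]
  _ = 2 * Real.exp (-(n : ℝ) * t ^ 2 / 2) := by ring

lemma tail_exp (n : ℕ) (hn : 1 ≤ n) (a : ℝ) (ha : 0 < a) :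
    IntegrableOn (fun t => t * Real.exp (-(n:ℝ) * t ^ 2 / 2)) (Set.Ioi a) ∧
    ∫ t in Set.Ioi a, t * Real.exp (-(n:ℝ) * t ^ 2 / 2) =
      (1 / (n:ℝ)) * Real.exp (-(n:ℝ) * a ^ 2 / 2) := by
  have hnpos : (0:ℝ) < n := by exact_mod_cast hn
  set g : ℝ → ℝ := fun x => -(1 / (n:ℝ)) * Real.exp (-(n:ℝ) * x ^ 2 / 2) with hg
  have hderiv : ∀ x : ℝ, HasDerivAt g (x * Real.exp (-(n:ℝ) * x ^ 2 / 2)) x := by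
    intro x
    have h1 : HasDerivAt (fun x : ℝ => -(n:ℝ) * x ^ 2 / 2) (-(n:ℝ) * (2 * x ^ 1) / 2) x :=
      ((hasDerivAt_pow 2 x).const_mul (-(n:ℝ))).div_const 2
    have h2 := (h1.exp).const_mul (-(1 / (n:ℝ)))
    refine h2.congr_deriv ?_
    field_simp
  have htends : Tendsto g atTop (nhds 0) := by
    have h1 : Tendsto (fun x : ℝ => x ^ 2) atTop atTop := tendsto_pow_atTop two_ne_zero
    have h2 : Tendsto (fun x : ℝ => -(n:ℝ) * x ^ 2) atTop atBot :=
      h1.const_mul_atTop_of_neg (by linarith)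
    have h3 : Tendsto (fun x : ℝ => -(n:ℝ) * x ^ 2 / 2) atTop atBot :=
      h2.atBot_div_const two_pos
    have h4 : Tendsto (fun x : ℝ => Real.exp (-(n:ℝ) * x ^ 2 / 2)) atTop (nhds 0) :=
      Real.tendsto_exp_atBot.comp h3
    have h5 := h4.const_mul (-(1 / (n:ℝ)))
    rw [mul_zero] at h5
    exact h5
  have g'pos : ∀ x ∈ Set.Ioi a, 0 ≤ x * Real.exp (-(n:ℝ) * x ^ 2 / 2) := by
    intro x hx
    have : 0 < x := lt_trans ha hx
    positivity
  have hint : IntegrableOn (fun t => t * Real.exp (-(n:ℝ) * t ^ 2 / 2)) (Set.Ioi a) :=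
    integrableOn_Ioi_deriv_of_nonneg' (fun x _ => hderiv x) g'pos htends
  refine ⟨hint, ?_⟩
  rw [integral_Ioi_of_hasDerivAt_of_tendsto' (fun x _ => hderiv x) hint htends]
  simp [hg]

/-- Expected uniform deviation bound via a net: if `G` is a class of measurable
functions `𝒵 → [0,2]` admitting a `(1/n)`-net `N ⊆ G` in sup norm with
`|N| ≤ (6n)^{2d}`, and `Z₁,…,Zₙ` are i.i.d., then with
`t* = √((4d·log(6n) + 2·log 2)/n)`, the uniform deviation
`U = sup_{g ∈ G} |(1/n)·Σᵢ g(Zᵢ) − E g|` satisfies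
`E[U] ≤ 2/n + t* + 1/(n·t*)`. -/
theorem uniform_deviation_expectation
    {Z : Type*} [MeasurableSpace Z]
    (ν : Measure Z) [IsProbabilityMeasure ν]
    (G : Set (Z → ℝ)) (hG : ∀ g ∈ G, Measurable g ∧ ∀ z, g z ∈ Set.Icc (0:ℝ) 2)
    (n : ℕ) (hn : 1 ≤ n) (d : ℕ)
    (N : Set (Z → ℝ)) (hNG : N ⊆ G) (hNfin : N.Finite)
    (hNcard : (N.ncard : ℝ) ≤ (6 * (n : ℝ)) ^ (2 * d))
    (hNnet : ∀ g ∈ G, ∃ g' ∈ N, ∀ z, |g z - g' z| ≤ 1 / n)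
    (U : (Fin n → Z) → ℝ)
    (hU : ∀ ω, U ω = ⨆ g : G, |(1 / (n : ℝ)) * ∑ i : Fin n, (g : Z → ℝ) (ω i) -
      ∫ z, (g : Z → ℝ) z ∂ν|)
    (hUmeas : Measurable U) :
    ∫ ω, U ω ∂(Measure.pi fun _ : Fin n => ν) ≤
      2 / n + Real.sqrt ((4 * d * Real.log (6 * n) + 2 * Real.log 2) / n) +
        1 / (n * Real.sqrt ((4 * d * Real.log (6 * n) + 2 * Real.log 2) / n)) := by
  classical
  set μ := Measure.pi fun _ : Fin n => ν with hμdef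
  haveI : IsProbabilityMeasure μ := by rw [hμdef]; infer_instance
  have hnpos : (0:ℝ) < n := by exact_mod_cast hn
  have h6n : (1:ℝ) < 6 * n := by
    have : (1:ℝ) ≤ (n:ℝ) := by exact_mod_cast hn
    nlinarith
  have hlog6n : 0 < Real.log (6 * n) := Real.log_pos h6n
  have hlog2 : 0 < Real.log 2 := Real.log_pos one_lt_two
  have hnum : 0 < (4 * d * Real.log (6 * n) + 2 * Real.log 2) / n := by
    have h1 : 0 ≤ 4 * (d:ℝ) * Real.log (6*n) := by positivity
    have h2 : 0 < 4 * (d:ℝ) * Real.log (6 * n) + 2 * Real.log 2 := by linarith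
    positivity
  set tstar := Real.sqrt ((4 * d * Real.log (6 * n) + 2 * Real.log 2) / n) with hts
  have htpos : 0 < tstar := Real.sqrt_pos.2 hnum
  have hts2 : tstar ^ 2 = (4 * d * Real.log (6 * n) + 2 * Real.log 2) / n :=
    Real.sq_sqrt hnum.le
  rcases Set.eq_empty_or_nonempty G with hGe | hGne
  · have hU0 : ∀ ω, U ω = 0 := by
      intro ω; rw [hU ω]
      haveI : IsEmpty ↥G := by rw [hGe]; infer_instance
      exact Real.iSup_of_isEmpty _
    simp only [hU0, integral_zero]
    positivity
  obtain ⟨g₀, hg₀⟩ := hGne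
  haveI : Nonempty ↥G := ⟨⟨g₀, hg₀⟩⟩
  -- basic bounds for each g ∈ G
  have hgint : ∀ g ∈ G, Integrable g ν := by
    intro g hg
    refine bdd_integrable ν (hG g hg).1 (C := 2) fun z => abs_le.2 ⟨?_, ((hG g hg).2 z).2⟩
    linarith [((hG g hg).2 z).1]
  have hterm2 : ∀ g ∈ G, ∀ ω : Fin n → Z,
      |(1/(n:ℝ)) * ∑ i : Fin n, g (ω i) - ∫ z, g z ∂ν| ≤ 2 := by
    intro g hg ω
    obtain ⟨hmeas, hrange⟩ := hG g hg
    have hsl : 0 ≤ ∑ i : Fin n, g (ω i) := Finset.sum_nonneg fun i _ => (hrange (ω i)).1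
    have hsu : ∑ i : Fin n, g (ω i) ≤ 2 * n := by
      calc ∑ i : Fin n, g (ω i) ≤ ∑ _i : Fin n, (2:ℝ) :=
            Finset.sum_le_sum fun i _ => (hrange (ω i)).2
      _ = 2 * n := by simp [mul_comm]
    have hil : 0 ≤ ∫ z, g z ∂ν := integral_nonneg fun z => (hrange z).1
    have hiu : ∫ z, g z ∂ν ≤ 2 := by
      calc ∫ z, g z ∂ν ≤ ∫ _, (2:ℝ) ∂ν :=
            integral_mono (hgint g hg) (integrable_const 2) fun z => (hrange z).2
      _ = 2 := by simp
    have hml : 0 ≤ (1/(n:ℝ)) * ∑ i : Fin n, g (ω i) := by positivity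
    have hmu : (1/(n:ℝ)) * ∑ i : Fin n, g (ω i) ≤ 2 := by
      rw [one_div_mul_eq_div, div_le_iff₀ hnpos]
      linarith
    rw [abs_le]; constructor <;> linarith
  have hbdd : ∀ ω : Fin n → Z, BddAbove (Set.range fun g : ↥G =>
      |(1/(n:ℝ)) * ∑ i : Fin n, (g : Z → ℝ) (ω i) - ∫ z, (g : Z → ℝ) z ∂ν|) := by
    intro ω
    refine ⟨2, ?_⟩
    rintro x ⟨g, rfl⟩
    exact hterm2 g g.2 ω
  have hU2 : ∀ ω, U ω ≤ 2 := by
    intro ω; rw [hU ω]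
    exact Real.iSup_le (fun g => hterm2 g g.2 ω) (by norm_num)
  have hU0 : ∀ ω, 0 ≤ U ω := by
    intro ω; rw [hU ω]
    exact Real.iSup_nonneg fun g => abs_nonneg _
  have hUint : Integrable U μ :=
    bdd_integrable μ hUmeas (C := 2) fun ω => abs_le.2 ⟨by linarith [hU0 ω], hU2 ω⟩
  set W : (Fin n → Z) → ℝ := fun ω => max (U ω - 2/(n:ℝ)) 0 with hW
  have hWmeas : Measurable W := (hUmeas.sub_const _).max measurable_const
  have hWnn : ∀ ω, 0 ≤ W ω := fun ω => le_max_right _ _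
  have hWint : Integrable W μ := by
    refine bdd_integrable μ hWmeas (C := 2) fun ω => ?_
    rw [abs_of_nonneg (hWnn ω)]
    refine max_le ?_ (by norm_num)
    have : 0 ≤ 2/(n:ℝ) := by positivity
    linarith [hU2 ω]
  have hUle : ∀ ω, U ω ≤ 2/(n:ℝ) + W ω := by
    intro ω
    have := le_max_left (U ω - 2/(n:ℝ)) 0
    simp only [hW]
    linarith
  have hstep1 : ∫ ω, U ω ∂μ ≤ 2/(n:ℝ) + ∫ ω, W ω ∂μ := by
    calc ∫ ω, U ω ∂μ ≤ ∫ ω, (2/(n:ℝ) + W ω) ∂μ :=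
          integral_mono hUint ((integrable_const _).add hWint) hUle
    _ = 2/(n:ℝ) + ∫ ω, W ω ∂μ := by
          rw [integral_add (integrable_const _) hWint, integral_const]
          simp
  have hlayer : ∫ ω, W ω ∂μ = ∫ t in Set.Ioi (0:ℝ), (μ {a | t < W a}).toReal :=
    hWint.integral_eq_integral_meas_lt (Filter.Eventually.of_forall hWnn)
  set F : ℝ → ℝ := fun t => (μ {a | t < W a}).toReal with hF
  have hFmeas : Measurable F :=
    Measurable.ennreal_toReal (Antitone.measurable fun s t hst =>
      measure_mono fun a ha => lt_of_le_of_lt hst ha)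
  have hF0 : ∀ t, 0 ≤ F t := fun t => ENNReal.toReal_nonneg
  have hF1 : ∀ t, F t ≤ 1 := by
    intro t
    have h1 : μ {a | t < W a} ≤ 1 := prob_le_one
    calc F t ≤ (1 : ℝ≥0∞).toReal := ENNReal.toReal_mono ENNReal.one_ne_top h1
    _ = 1 := ENNReal.toReal_one
  set P := (6 * (n:ℝ)) ^ (2 * d) with hP
  have hPpos : 0 < P := by positivity
  -- tail bound via net + union bound + Chernoff
  have htail : ∀ t : ℝ, 0 < t → F t ≤ P * (2 * Real.exp (-(n:ℝ) * t ^ 2 / 2)) := by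
    intro t htp
    set A : (Z → ℝ) → Set (Fin n → Z) := fun g =>
      {ω : Fin n → Z | t ≤ |(1/(n:ℝ)) * ∑ i : Fin n, g (ω i) - ∫ z, g z ∂ν|} with hA
    have hsub : {a : Fin n → Z | t < W a} ⊆ ⋃ g ∈ hNfin.toFinset, A g := by
      intro ω hω
      simp only [Set.mem_setOf_eq, hW] at hω
      have hUω : 2/(n:ℝ) + t < U ω := by
        rcases lt_max_iff.1 hω with hc | hc
        · linarith
        · linarith
      rw [hU ω] at hUω
      obtain ⟨⟨g, hgG⟩, hgt⟩ := (lt_ciSup_iff (hbdd ω)).1 hUω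
      simp only at hgt
      obtain ⟨g', hg'N, hnet⟩ := hNnet g hgG
      have hg'G : g' ∈ G := hNG hg'N
      have hmean : |(1/(n:ℝ)) * ∑ i : Fin n, g (ω i) - (1/(n:ℝ)) * ∑ i : Fin n, g' (ω i)|
          ≤ 1/(n:ℝ) := by
        rw [← mul_sub, ← Finset.sum_sub_distrib, abs_mul]
        have h1 : |∑ i : Fin n, (g (ω i) - g' (ω i))| ≤ 1 := by
          calc |∑ i : Fin n, (g (ω i) - g' (ω i))| ≤ ∑ i : Fin n, |g (ω i) - g' (ω i)| :=
                Finset.abs_sum_le_sum_abs _ _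
          _ ≤ ∑ _i : Fin n, (1/(n:ℝ)) := Finset.sum_le_sum fun i _ => hnet (ω i)
          _ = 1 := by
                rw [Finset.sum_const, Finset.card_univ, Fintype.card_fin, nsmul_eq_mul]
                field_simp
        have habs1n : |1/(n:ℝ)| = 1/(n:ℝ) := abs_of_pos (by positivity)
        rw [habs1n]
        calc (1/(n:ℝ)) * |∑ i : Fin n, (g (ω i) - g' (ω i))| ≤ (1/(n:ℝ)) * 1 :=
              mul_le_mul_of_nonneg_left h1 (by positivity)
        _ = 1/(n:ℝ) := mul_one _
      have hinteg : |∫ z, g z ∂ν - ∫ z, g' z ∂ν| ≤ 1/(n:ℝ) := by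
        rw [← integral_sub (hgint g hgG) (hgint g' hg'G)]
        calc |∫ z, (g z - g' z) ∂ν| ≤ ∫ z, |g z - g' z| ∂ν := by
              simpa [Real.norm_eq_abs] using
                norm_integral_le_integral_norm (μ := ν) (fun z => g z - g' z)
        _ ≤ ∫ _, (1/(n:ℝ)) ∂ν :=
              integral_mono ((hgint g hgG).sub (hgint g' hg'G)).abs (integrable_const _)
                fun z => hnet z
        _ = 1/(n:ℝ) := by simp
      have htri : |(1/(n:ℝ)) * ∑ i : Fin n, g (ω i) - ∫ z, g z ∂ν| ≤
          |(1/(n:ℝ)) * ∑ i : Fin n, g' (ω i) - ∫ z, g' z ∂ν| + 2/(n:ℝ) := by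
        have h1 := abs_sub_le ((1/(n:ℝ)) * ∑ i : Fin n, g (ω i))
          ((1/(n:ℝ)) * ∑ i : Fin n, g' (ω i)) (∫ z, g z ∂ν)
        have h2 := abs_sub_le ((1/(n:ℝ)) * ∑ i : Fin n, g' (ω i))
          (∫ z, g' z ∂ν) (∫ z, g z ∂ν)
        have h3 : |∫ z, g' z ∂ν - ∫ z, g z ∂ν| = |∫ z, g z ∂ν - ∫ z, g' z ∂ν| := abs_sub_comm _ _
        rw [h3] at h2
        have : (2:ℝ)/(n:ℝ) = 1/(n:ℝ) + 1/(n:ℝ) := by ring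
        rw [this]
        linarith
      have hfin : t ≤ |(1/(n:ℝ)) * ∑ i : Fin n, g' (ω i) - ∫ z, g' z ∂ν| := by linarith
      exact Set.mem_biUnion (hNfin.mem_toFinset.2 hg'N) hfin
    have hmeasure : μ {a | t < W a} ≤ ∑ g ∈ hNfin.toFinset, μ (A g) :=
      (measure_mono hsub).trans (measure_biUnion_finset_le _ _)
    have hsumne : (∑ g ∈ hNfin.toFinset, μ (A g)) ≠ ⊤ :=
      (ENNReal.sum_lt_top.2 fun g _ => measure_lt_top μ _).ne
    calc F t ≤ (∑ g ∈ hNfin.toFinset, μ (A g)).toReal := ENNReal.toReal_mono hsumne hmeasure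
    _ = ∑ g ∈ hNfin.toFinset, (μ (A g)).toReal :=
          ENNReal.toReal_sum fun g _ => measure_ne_top μ _
    _ ≤ (hNfin.toFinset.card : ℝ) * (2 * Real.exp (-(n:ℝ) * t ^ 2 / 2)) := by
          have := Finset.sum_le_card_nsmul hNfin.toFinset (fun g => (μ (A g)).toReal)
            (2 * Real.exp (-(n:ℝ) * t ^ 2 / 2)) (fun g hg => by
              have hgG := hNG (hNfin.mem_toFinset.1 hg)
              exact chernoff_bound ν n hn g (hG g hgG).1 (hG g hgG).2 t htp.le)
          simpa [nsmul_eq_mul] using this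
    _ ≤ P * (2 * Real.exp (-(n:ℝ) * t ^ 2 / 2)) := by
          have hcard : (hNfin.toFinset.card : ℝ) ≤ P := by
            have hc2 : N.ncard = hNfin.toFinset.card := Set.ncard_eq_toFinset_card N hNfin
            rw [← hc2]
            exact hNcard
          exact mul_le_mul_of_nonneg_right hcard (by positivity)
  -- split the integral
  obtain ⟨hint2, hval2⟩ := tail_exp n hn tstar htpos
  have hconst1 : IntegrableOn (fun _ : ℝ => (1:ℝ)) (Set.Ioc 0 tstar) volume :=
    integrableOn_const measure_Ioc_lt_top.ne
  have int1 : IntegrableOn F (Set.Ioc 0 tstar) := by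
    refine Integrable.mono' hconst1
      hFmeas.aestronglyMeasurable.restrict (Filter.Eventually.of_forall fun t => ?_)
    rw [Real.norm_eq_abs, abs_of_nonneg (hF0 t)]
    exact hF1 t
  have hdom : ∀ t ∈ Set.Ioi tstar, F t ≤ (2 * P / tstar) * (t * Real.exp (-(n:ℝ) * t ^ 2 / 2)) := by
    intro t ht
    have htt : tstar < t := ht
    have h1 := htail t (htpos.trans htt)
    have hexp := Real.exp_nonneg (-(n:ℝ) * t ^ 2 / 2)
    have h2 : P * (2 * Real.exp (-(n:ℝ) * t ^ 2 / 2)) ≤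
        (2 * P / tstar) * (t * Real.exp (-(n:ℝ) * t ^ 2 / 2)) := by
      rw [div_mul_eq_mul_div, le_div_iff₀ htpos]
      nlinarith [mul_nonneg (mul_nonneg (sub_nonneg.2 htt.le) hPpos.le) hexp]
    linarith
  have int2 : IntegrableOn F (Set.Ioi tstar) := by
    refine Integrable.mono' (hint2.const_mul (2 * P / tstar))
      hFmeas.aestronglyMeasurable.restrict ?_
    rw [ae_restrict_iff' measurableSet_Ioi]
    refine Filter.Eventually.of_forall fun t ht => ?_
    rw [Real.norm_eq_abs, abs_of_nonneg (hF0 t)]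
    exact hdom t ht
  have hsplit : ∫ t in Set.Ioi (0:ℝ), F t = (∫ t in Set.Ioc 0 tstar, F t) +
      ∫ t in Set.Ioi tstar, F t := by
    rw [← setIntegral_union (Set.Ioc_disjoint_Ioi le_rfl) measurableSet_Ioi int1 int2,
      Set.Ioc_union_Ioi_eq_Ioi htpos.le]
  have hbound1 : ∫ t in Set.Ioc 0 tstar, F t ≤ tstar := by
    calc ∫ t in Set.Ioc 0 tstar, F t ≤ ∫ _t in Set.Ioc 0 tstar, (1:ℝ) :=
          setIntegral_mono_on int1 hconst1 measurableSet_Ioc fun t _ => hF1 t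
    _ = tstar := by
          rw [setIntegral_const]
          simp [Real.volume_Ioc, ENNReal.toReal_ofReal htpos.le, htpos.le]
  have hexpval : Real.exp (-(n:ℝ) * tstar ^ 2 / 2) = (P * 2)⁻¹ := by
    rw [hts2]
    have harg : -(n:ℝ) * ((4 * d * Real.log (6 * n) + 2 * Real.log 2) / n) / 2 =
        -(((2 * d : ℕ):ℝ) * Real.log (6 * n) + Real.log 2) := by
      push_cast
      field_simp
      ring
    rw [harg, Real.exp_neg, Real.exp_add, Real.exp_nat_mul,
      Real.exp_log (by positivity : (0:ℝ) < 6 * n), Real.exp_log two_pos, hP]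
  have hbound2 : ∫ t in Set.Ioi tstar, F t ≤ 1 / ((n:ℝ) * tstar) := by
    calc ∫ t in Set.Ioi tstar, F t
        ≤ ∫ t in Set.Ioi tstar, (2 * P / tstar) * (t * Real.exp (-(n:ℝ) * t ^ 2 / 2)) :=
          setIntegral_mono_on int2 (hint2.const_mul _) measurableSet_Ioi hdom
    _ = (2 * P / tstar) * ∫ t in Set.Ioi tstar, t * Real.exp (-(n:ℝ) * t ^ 2 / 2) :=
          integral_const_mul _ _
    _ = (2 * P / tstar) * ((1 / (n:ℝ)) * (P * 2)⁻¹) := by rw [hval2, hexpval]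
    _ = 1 / ((n:ℝ) * tstar) := by
          field_simp
  calc ∫ ω, U ω ∂μ ≤ 2/(n:ℝ) + ∫ ω, W ω ∂μ := hstep1
  _ = 2/(n:ℝ) + ((∫ t in Set.Ioc 0 tstar, F t) + ∫ t in Set.Ioi tstar, F t) := by
        rw [hlayer, ← hsplit]
  _ ≤ 2/(n:ℝ) + (tstar + 1 / ((n:ℝ) * tstar)) := by linarith
  _ = 2/(n:ℝ) + tstar + 1 / ((n:ℝ) * tstar) := by ring
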